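/- The orthogonal complement of Range(Γ) in H_n, where Γ(Φ) = ∫ G Φ G*, consists exactly of the Hermitian matrices X such that G(e^{jθ})* X G(e^{jθ}) = 0 for all θ ∈ [0,2π]. -/

import Mathlib

open Matrix MeasureTheory Real Filter
open scoped ComplexOrder

noncomputable section

abbrev Mat (n : ℕ) := Matrix (Fin n) (Fin n) ℂ
abbrev Vec (n : ℕ) := Matrix (Fin n) (Fin 1) ℂ

/-- the point e^{jθ} on the unit circle -/
def circPt (θ : ℝ) : ℂ := Complex.exp (θ * Complex.I)

/-- G(e^{jθ}) = (e^{jθ} I - A)⁻¹ B -/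
def Gm {n : ℕ} (A : Mat n) (B : Vec n) (θ : ℝ) : Vec n :=
  (circPt θ • (1 : Mat n) - A)⁻¹ * B

/-- the scalar G* Λ G at e^{jθ} -/
def quad {n : ℕ} (A : Mat n) (B : Vec n) (Λ : Mat n) (θ : ℝ) : ℂ :=
  ((Gm A B θ)ᴴ * Λ * Gm A B θ) 0 0

/-- normalized entrywise matrix integral over the unit circle -/
def mInt {n : ℕ} (f : ℝ → Mat n) : Mat n :=
  Matrix.of fun i j => (1 / (2 * π) : ℝ) • ∫ θ in (0:ℝ)..(2 * π), f θ i j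

/-- normalized scalar (complex) integral over the unit circle -/
def sInt (f : ℝ → ℂ) : ℂ := (1 / (2 * π) : ℝ) • ∫ θ in (0:ℝ)..(2 * π), f θ

/-- normalized scalar (real) integral over the unit circle -/
def sIntR (f : ℝ → ℝ) : ℝ := (1 / (2 * π)) * ∫ θ in (0:ℝ)..(2 * π), f θ

/-- all eigenvalues of A lie in the open unit disc -/
def IsStable {n : ℕ} (A : Mat n) : Prop := ∀ μ ∈ spectrum ℂ A, ‖μ‖ < 1

/-- (A,B) is a reachable pair: the controllability matrix has full rank -/
def Reachable {n : ℕ} (A : Mat n) (B : Vec n) : Prop :=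
  (Matrix.of fun (i : Fin n) (k : Fin n) => (A ^ (k : ℕ) * B) i 0).rank = n

open scoped Classical in
/-- positive semidefinite square root (junk value 0 off the psd cone) -/
def msqrt {n : ℕ} (M : Mat n) : Mat n :=
  if h : M.PosSemidef then
    h.1.eigenvectorUnitary.1 * diagonal ((↑) ∘ (√·) ∘ h.1.eigenvalues) *
      (star h.1.eigenvectorUnitary : Mat n)
  else 0

/-- the moment map ∫ G (Ψ/(G*ΛG)) G* -/
def moment {n : ℕ} (A : Mat n) (B : Vec n) (Ψ : ℝ → ℝ) (Λ : Mat n) : Mat n :=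
  mInt (fun θ => ((Ψ θ : ℂ) / quad A B Λ θ) • (Gm A B θ * (Gm A B θ)ᴴ))

/-- the iteration map Θ(Λ) = ∫ Λ^{1/2} G (Ψ/(G*ΛG)) G* Λ^{1/2} -/
def Theta {n : ℕ} (A : Mat n) (B : Vec n) (Ψ : ℝ → ℝ) (Λ : Mat n) : Mat n :=
  mInt (fun θ => ((Ψ θ : ℂ) / quad A B Λ θ) •
    (msqrt Λ * (Gm A B θ * (Gm A B θ)ᴴ) * msqrt Λ))

/-- the linearization M of Θ at Λ:
M(X) = X - Λ^{1/2} ∫ (GΨG*/(G*ΛG)) (G*XG/(G*ΛG)) Λ^{1/2} -/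
def Mlin {n : ℕ} (A : Mat n) (B : Vec n) (Ψ : ℝ → ℝ) (Λ : Mat n) (X : Mat n) : Mat n :=
  X - msqrt Λ * mInt (fun θ =>
    (((Ψ θ : ℂ) * (((Gm A B θ)ᴴ * X * Gm A B θ) 0 0)) / (quad A B Λ θ) ^ 2) •
      (Gm A B θ * (Gm A B θ)ᴴ)) * msqrt Λ

/-- the range of the operator Γ : Φ ↦ ∫ G Φ G* on continuous (2π-periodic) functions -/
def RangeGamma {n : ℕ} (A : Mat n) (B : Vec n) : Set (Mat n) :=
  {M | ∃ Φ : ℝ → ℝ, Continuous Φ ∧ (∀ θ, Φ (θ + 2 * π) = Φ θ) ∧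
    M = mInt (fun θ => (Φ θ : ℂ) • (Gm A B θ * (Gm A B θ)ᴴ))}

section Aux

lemma circPt_continuous : Continuous circPt :=
  Complex.continuous_exp.comp (Complex.continuous_ofReal.mul continuous_const)

lemma circPt_norm (θ : ℝ) : ‖circPt θ‖ = 1 := by
  simpa [circPt] using Complex.norm_exp_ofReal_mul_I θ

lemma circPt_periodic (θ : ℝ) : circPt (θ + 2 * π) = circPt θ := by
  unfold circPt
  push_cast
  rw [add_mul, Complex.exp_add, Complex.exp_two_pi_mul_I, mul_one]

lemma det_ne_zero {n : ℕ} {A : Mat n} (hA : IsStable A) (θ : ℝ) :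
    (circPt θ • (1 : Mat n) - A).det ≠ 0 := by
  intro h
  have hmem : circPt θ ∈ spectrum ℂ A := by
    rw [spectrum.mem_iff, Algebra.algebraMap_eq_smul_one]
    intro hu
    rw [Matrix.isUnit_iff_isUnit_det, h] at hu
    exact not_isUnit_zero hu
  have := hA _ hmem
  rw [circPt_norm θ] at this
  exact lt_irrefl 1 this

lemma Gm_continuous {n : ℕ} {A : Mat n} {B : Vec n} (hA : IsStable A) :
    Continuous (Gm A B) := by
  have h1 : Continuous fun θ => circPt θ • (1 : Mat n) - A :=
    (circPt_continuous.smul continuous_const).sub continuous_const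
  have h2 : Continuous fun θ => (circPt θ • (1 : Mat n) - A)⁻¹ := by
    simp only [Matrix.inv_def, Ring.inverse_eq_inv']
    exact (h1.matrix_det.inv₀ fun θ => det_ne_zero hA θ).smul h1.matrix_adjugate
  exact h2.matrix_mul continuous_const

lemma Gm_periodic {n : ℕ} (A : Mat n) (B : Vec n) (θ : ℝ) :
    Gm A B (θ + 2 * π) = Gm A B θ := by
  unfold Gm; rw [circPt_periodic]

/-- trace of `X` times an entrywise integral -/
lemma trace_mul_mInt {n : ℕ} (X : Mat n) (f : ℝ → Mat n)
    (hf : ∀ i j, IntervalIntegrable (fun θ => f θ i j) volume 0 (2 * π)) :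
    (X * mInt f).trace = (1 / (2 * π) : ℝ) • ∫ θ in (0:ℝ)..(2 * π), (X * f θ).trace := by
  have hint2 : ∀ i : Fin n, ∀ j ∈ Finset.univ,
      IntervalIntegrable (fun θ => X i j * f θ j i) volume 0 (2 * π) :=
    fun i j _ => (hf j i).const_mul (X i j)
  have hint1 : ∀ i ∈ Finset.univ,
      IntervalIntegrable (fun θ => ∑ j : Fin n, X i j * f θ j i) volume 0 (2 * π) := by
    intro i _
    have h0 : (fun θ => ∑ j : Fin n, X i j * f θ j i)
        = ∑ j : Fin n, (fun θ => X i j * f θ j i) := by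
      funext θ; simp
    rw [h0]
    exact IntervalIntegrable.sum _ (hint2 i)
  have key : ∀ θ : ℝ, (X * f θ).trace = ∑ i : Fin n, ∑ j : Fin n, X i j * f θ j i := by
    intro θ; simp [Matrix.trace, Matrix.diag, Matrix.mul_apply]
  calc (X * mInt f).trace
      = ∑ i : Fin n, ∑ j : Fin n, (1 / (2 * π) : ℝ) • ∫ θ in (0:ℝ)..(2 * π), X i j * f θ j i := by
        rw [Matrix.trace]
        refine Finset.sum_congr rfl fun i _ => ?_
        rw [Matrix.diag_apply, Matrix.mul_apply]
        refine Finset.sum_congr rfl fun j _ => ?_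
        show X i j * ((1 / (2 * π) : ℝ) • ∫ θ in (0:ℝ)..(2 * π), f θ j i) = _
        rw [mul_smul_comm, intervalIntegral.integral_const_mul]
    _ = (1 / (2 * π) : ℝ) • ∑ i : Fin n, ∑ j : Fin n,
          ∫ θ in (0:ℝ)..(2 * π), X i j * f θ j i := by
        rw [Finset.smul_sum]
        exact Finset.sum_congr rfl fun i _ => (Finset.smul_sum).symm
    _ = (1 / (2 * π) : ℝ) • ∫ θ in (0:ℝ)..(2 * π), ∑ i : Fin n, ∑ j : Fin n, X i j * f θ j i := by
        rw [intervalIntegral.integral_finset_sum hint1]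
        congr 1
        exact Finset.sum_congr rfl fun i _ => (intervalIntegral.integral_finset_sum (hint2 i)).symm
    _ = (1 / (2 * π) : ℝ) • ∫ θ in (0:ℝ)..(2 * π), (X * f θ).trace := by
        exact congrArg _ (intervalIntegral.integral_congr fun θ _ => (key θ).symm)

lemma trace_formula {n : ℕ} (X : Mat n) (G : Vec n) (c : ℂ) :
    (X * (c • (G * Gᴴ))).trace = c * ((Gᴴ * X * G) 0 0) := by
  rw [Matrix.mul_smul, Matrix.trace_smul, smul_eq_mul]
  congr 1
  rw [← Matrix.mul_assoc, Matrix.trace_mul_cycle]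
  simp [Matrix.trace, Matrix.mul_assoc]


/-- the scalar function G* X G -/
def qf {n : ℕ} (A : Mat n) (B : Vec n) (X : Mat n) (θ : ℝ) : ℂ :=
  ((Gm A B θ)ᴴ * X * Gm A B θ) 0 0

end Aux

/-- (Range Γ)^⊥ = {X Hermitian : G* X G ≡ 0 on the circle}. -/
theorem stmt5 {n : ℕ} (A : Mat n) (B : Vec n)
    (hA : IsStable A) (hR : Reachable A B) :
    ∀ X : Mat n, X.IsHermitian →
      ((∀ M ∈ RangeGamma A B, (X * M).trace = 0) ↔
        ∀ θ : ℝ, (Gm A B θ)ᴴ * X * Gm A B θ = 0) := by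
  intro X hX
  have hGc : Continuous (Gm A B) := Gm_continuous hA
  have hqc : Continuous (qf A B X) :=
    ((hGc.matrix_conjTranspose.matrix_mul continuous_const).matrix_mul hGc).matrix_elem 0 0
  have hqreal : ∀ θ, ((qf A B X θ).re : ℂ) = qf A B X θ := by
    intro θ
    rw [← Complex.conj_eq_iff_re]
    have h1 : ((Gm A B θ)ᴴ * X * Gm A B θ)ᴴ = (Gm A B θ)ᴴ * X * Gm A B θ := by
      rw [Matrix.conjTranspose_mul, Matrix.conjTranspose_mul,
        Matrix.conjTranspose_conjTranspose, hX.eq, Matrix.mul_assoc]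
    calc (starRingEnd ℂ) (qf A B X θ)
        = ((Gm A B θ)ᴴ * X * Gm A B θ)ᴴ 0 0 := by
          rw [Matrix.conjTranspose_apply]; rfl
      _ = qf A B X θ := by rw [h1]; rfl
  have hqper : ∀ θ, qf A B X (θ + 2 * π) = qf A B X θ := by
    intro θ; unfold qf; rw [Gm_periodic]
  have hfint : ∀ (Φ : ℝ → ℝ), Continuous Φ → ∀ i j,
      IntervalIntegrable (fun θ => ((Φ θ : ℂ) • (Gm A B θ * (Gm A B θ)ᴴ)) i j)
        volume 0 (2 * π) := by
    intro Φ hΦ i j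
    exact (((Complex.continuous_ofReal.comp hΦ).smul
      (hGc.matrix_mul hGc.matrix_conjTranspose)).matrix_elem i j).intervalIntegrable _ _
  constructor
  · intro h θ₀
    set Φ : ℝ → ℝ := fun θ => (qf A B X θ).re with hΦdef
    have hΦc : Continuous Φ := Complex.continuous_re.comp hqc
    have hΦper : Function.Periodic Φ (2 * π) := fun θ => congrArg Complex.re (hqper θ)
    have hM : mInt (fun θ => ((Φ θ : ℂ)) • (Gm A B θ * (Gm A B θ)ᴴ)) ∈ RangeGamma A B :=
      ⟨Φ, hΦc, hΦper, rfl⟩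
    have h0 := h _ hM
    rw [trace_mul_mInt _ _ (hfint Φ hΦc)] at h0
    have h1 : ∀ θ, (X * ((Φ θ : ℂ) • (Gm A B θ * (Gm A B θ)ᴴ))).trace
        = ((Φ θ ^ 2 : ℝ) : ℂ) := by
      intro θ
      rw [trace_formula]
      have : ((Gm A B θ)ᴴ * X * Gm A B θ) 0 0 = (Φ θ : ℂ) := (hqreal θ).symm
      rw [this]
      push_cast; ring
    rw [intervalIntegral.integral_congr (fun θ _ => h1 θ),
      intervalIntegral.integral_ofReal, Complex.real_smul, ← Complex.ofReal_mul] at h0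
    have hπ : (0:ℝ) < 2 * π := by positivity
    have h2 : (∫ θ in (0:ℝ)..(2 * π), Φ θ ^ 2) = 0 := by
      have h3 := Complex.ofReal_eq_zero.mp h0
      have hne : (1 / (2 * π) : ℝ) ≠ 0 := by positivity
      exact (mul_eq_zero.mp h3).resolve_left hne
    have hint : IntervalIntegrable (fun θ => Φ θ ^ 2) volume 0 (2 * π) :=
      (hΦc.pow 2).intervalIntegrable _ _
    have hae : (fun θ => Φ θ ^ 2) =ᵐ[volume.restrict (Set.Ioc 0 (2 * π))] 0 :=
      (intervalIntegral.integral_eq_zero_iff_of_le_of_nonneg_ae hπ.le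
        (Filter.Eventually.of_forall fun θ => sq_nonneg _) hint).mp h2
    have hzero : ∀ θ ∈ Set.Ioo (0:ℝ) (2 * π), Φ θ = 0 := by
      intro θ hθ
      by_contra hne
      have hVopen : IsOpen ({x | Φ x ≠ 0} ∩ Set.Ioo 0 (2 * π)) :=
        (isOpen_compl_singleton.preimage hΦc).inter isOpen_Ioo
      have hVne : ({x | Φ x ≠ 0} ∩ Set.Ioo 0 (2 * π)).Nonempty := ⟨θ, hne, hθ⟩
      have hpos : 0 < volume ({x | Φ x ≠ 0} ∩ Set.Ioo 0 (2 * π)) :=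
        hVopen.measure_pos volume hVne
      have hres : volume.restrict (Set.Ioc 0 (2 * π)) {x | Φ x ^ 2 ≠ 0} = 0 := by
        have := hae
        rw [Filter.EventuallyEq, ae_iff] at this
        simpa using this
      have h4 : volume.restrict (Set.Ioc 0 (2 * π))
          ({x | Φ x ≠ 0} ∩ Set.Ioo 0 (2 * π)) = 0 :=
        measure_mono_null (fun x hx => pow_ne_zero 2 hx.1) hres
      rw [Measure.restrict_apply hVopen.measurableSet,
        Set.inter_eq_left.mpr (fun x hx => Set.Ioo_subset_Ioc_self hx.2)] at h4
      exact absurd h4 hpos.ne'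
    have hIcc : ∀ θ ∈ Set.Icc (0:ℝ) (2 * π), Φ θ = 0 := by
      have hEq : Set.EqOn Φ (fun _ => 0) (Set.Ioo 0 (2 * π)) := fun θ hθ => hzero θ hθ
      have hcl := hEq.closure hΦc continuous_const
      rw [closure_Ioo hπ.ne] at hcl
      exact fun θ hθ => hcl hθ
    have hΦ0 : Φ θ₀ = 0 := by
      obtain ⟨y, hy, hyeq⟩ := hΦper.exists_mem_Ico₀ hπ θ₀
      rw [hyeq]
      exact hIcc y ⟨hy.1, hy.2.le⟩
    have hq0 : qf A B X θ₀ = 0 := by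
      rw [← hqreal θ₀]
      have : (qf A B X θ₀).re = Φ θ₀ := rfl
      rw [this, hΦ0, Complex.ofReal_zero]
    ext i j
    have hi : i = 0 := Subsingleton.elim i 0
    have hj : j = 0 := Subsingleton.elim j 0
    subst hi; subst hj
    rw [Matrix.zero_apply]
    exact hq0
  · intro h M hM
    obtain ⟨Φ, hΦc, hΦper, rfl⟩ := hM
    rw [trace_mul_mInt _ _ (hfint Φ hΦc)]
    have h1 : ∀ θ, (X * ((Φ θ : ℂ) • (Gm A B θ * (Gm A B θ)ᴴ))).trace = 0 := by
      intro θ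
      rw [trace_formula, h θ, Matrix.zero_apply, mul_zero]
    rw [intervalIntegral.integral_congr (fun θ _ => h1 θ)]
    simp
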